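/- arXiv:2602.18331 — 2 statements merged into one kernel-verified Lean document; each statement's English description precedes it below -/
import Mathlib

section
/- Let H be a symmetric positive definite n×n real matrix and let h : R^m → R^n be a map. For each parameter p, let z*(p) denote the unique minimizer of (1/2)z^T H z + h(p)^T z over the box [-1,1]^n. If h is Lipschitz continuous with constant L_h (with respect to Euclidean norms), then the solution map p ↦ z*(p) is Lipschitz continuous with constant L_h / λ_min(H), where λ_min(H) is the smallest eigenvalue of H. -/
open Matrix

/-- Euclidean norm of a finite real vector. -/
noncomputable def euclEnorm {ι : Type*} [Fintype ι] (x : ι → ℝ) : ℝ :=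
  Real.sqrt (∑ i, x i ^ 2)

lemma enorm_eq_norm' {ι : Type*} [Fintype ι] (x : ι → ℝ) :
    euclEnorm x = ‖(WithLp.equiv 2 (ι → ℝ)).symm x‖ := by
  rw [EuclideanSpace.norm_eq, euclEnorm]
  congr 1; apply Finset.sum_congr rfl; intro i _
  rw [WithLp.equiv_symm_apply, WithLp.ofLp_toLp, Real.norm_eq_abs, sq_abs]

lemma enorm_nonneg' {ι : Type*} [Fintype ι] (x : ι → ℝ) : 0 ≤ euclEnorm x :=
  Real.sqrt_nonneg _

lemma enorm_sub_symm {ι : Type*} [Fintype ι] (x y : ι → ℝ) :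
    euclEnorm (x - y) = euclEnorm (y - x) := by
  unfold euclEnorm
  congr 1; apply Finset.sum_congr rfl; intro i _
  simp only [Pi.sub_apply]; ring

lemma sq_enorm {ι : Type*} [Fintype ι] (x : ι → ℝ) :
    euclEnorm x ^ 2 = ∑ i, x i ^ 2 := by
  rw [euclEnorm, Real.sq_sqrt (Finset.sum_nonneg fun i _ => sq_nonneg _)]

lemma dot_eq_inner' {ι : Type*} [Fintype ι] (x y : ι → ℝ) :
    x ⬝ᵥ y = inner (𝕜 := ℝ) ((WithLp.equiv 2 (ι → ℝ)).symm x)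
      ((WithLp.equiv 2 (ι → ℝ)).symm y) := by
  rw [PiLp.inner_apply]; simp [dotProduct, WithLp.equiv_symm_apply, mul_comm]

lemma dot_le_enorm_mul_enorm {ι : Type*} [Fintype ι] (x y : ι → ℝ) :
    x ⬝ᵥ y ≤ euclEnorm x * euclEnorm y := by
  rw [dot_eq_inner', enorm_eq_norm', enorm_eq_norm']
  exact real_inner_le_norm _ _

lemma eig_quad_lower {n : ℕ} [Nonempty (Fin n)] (H : Matrix (Fin n) (Fin n) ℝ) (hH : H.PosDef)
    (d : Fin n → ℝ) :
    (Finset.univ.inf' Finset.univ_nonempty hH.1.eigenvalues) * (∑ i, d i ^ 2) ≤ d ⬝ᵥ H *ᵥ d := by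
  set V : Matrix (Fin n) (Fin n) ℝ := (hH.1.eigenvectorUnitary : Matrix (Fin n) (Fin n) ℝ) with hV
  set lam := hH.1.eigenvalues with hlam
  set w : Fin n → ℝ := Vᵀ *ᵥ d with hw
  have hstar : star V = Vᵀ := by
    rw [star_eq_conjTranspose, conjTranspose_eq_transpose_of_trivial]
  have hspec := hH.1.spectral_theorem
  rw [RCLike.ofReal_real_eq_id, Function.id_comp, Unitary.conjStarAlgAut_apply, hstar] at hspec
  have huni : V * Vᵀ = 1 := by
    rw [← hstar]; exact (Matrix.mem_unitaryGroup_iff).mp hH.1.eigenvectorUnitary.2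
  have hquad : d ⬝ᵥ H *ᵥ d = ∑ i, lam i * w i ^ 2 := by
    conv_lhs => rw [hspec]
    rw [← mulVec_mulVec, ← mulVec_mulVec, dotProduct_mulVec, ← mulVec_transpose, ← hw]
    simp only [mulVec_diagonal, dotProduct]
    exact Finset.sum_congr rfl fun i _ => by ring
  have hsum : ∑ i, w i ^ 2 = ∑ i, d i ^ 2 := by
    have : w ⬝ᵥ w = d ⬝ᵥ d := by
      rw [hw, dotProduct_mulVec, ← mulVec_transpose, mulVec_mulVec, transpose_transpose,
        huni, one_mulVec]
    simpa [dotProduct, pow_two] using this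
  rw [hquad, ← hsum, Finset.mul_sum]
  apply Finset.sum_le_sum
  intro i _
  have h1 : Finset.univ.inf' Finset.univ_nonempty lam ≤ lam i :=
    Finset.inf'_le _ (Finset.mem_univ i)
  nlinarith [sq_nonneg (w i)]

theorem stmt_0 {n m : ℕ} [Nonempty (Fin n)]
    (H : Matrix (Fin n) (Fin n) ℝ) (hH : H.PosDef)
    (h : (Fin m → ℝ) → (Fin n → ℝ)) (Lh : ℝ)
    (hLip : ∀ p q, euclEnorm (h p - h q) ≤ Lh * euclEnorm (p - q))
    (zs : (Fin m → ℝ) → (Fin n → ℝ))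
    (hmem : ∀ p i, zs p i ∈ Set.Icc (-1 : ℝ) 1)
    (hopt : ∀ p z, (∀ i, z i ∈ Set.Icc (-1 : ℝ) 1) →
      (1/2) * (zs p ⬝ᵥ (H *ᵥ zs p)) + h p ⬝ᵥ zs p ≤
        (1/2) * (z ⬝ᵥ (H *ᵥ z)) + h p ⬝ᵥ z) :
    ∀ p q, euclEnorm (zs p - zs q) ≤
      (Lh / (Finset.univ.inf' Finset.univ_nonempty hH.1.eigenvalues)) * euclEnorm (p - q) := by
  set lam := Finset.univ.inf' Finset.univ_nonempty hH.1.eigenvalues with hlamdef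
  have hsymT : Hᵀ = H := by
    rw [← conjTranspose_eq_transpose_of_trivial]; exact hH.1
  have hsymm : ∀ x y : Fin n → ℝ, x ⬝ᵥ H *ᵥ y = y ⬝ᵥ H *ᵥ x := by
    intro x y
    rw [dotProduct_mulVec, ← mulVec_transpose, hsymT, dotProduct_comm]
  have hlam_pos : 0 < lam := by
    rw [hlamdef]
    apply (Finset.lt_inf'_iff _).mpr
    intro i _
    exact hH.eigenvalues_pos i
  -- variational inequality at the minimizer
  have VI : ∀ p z, (∀ i, z i ∈ Set.Icc (-1 : ℝ) 1) →
      0 ≤ (H *ᵥ zs p + h p) ⬝ᵥ (z - zs p) := by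
    intro p z hz
    set u := zs p with hu
    set d : Fin n → ℝ := z - u with hd
    set G : ℝ := (H *ᵥ u + h p) ⬝ᵥ d with hG
    set C : ℝ := d ⬝ᵥ H *ᵥ d with hC
    have hC0 : 0 ≤ C := by
      have := eig_quad_lower H hH d
      have hs : 0 ≤ ∑ i, d i ^ 2 := Finset.sum_nonneg fun i _ => sq_nonneg _
      nlinarith
    have key : ∀ t : ℝ, 0 ≤ t → t ≤ 1 → 0 ≤ t * G + t ^ 2 / 2 * C := by
      intro t ht0 ht1
      have hfeas : ∀ i, (u + t • d) i ∈ Set.Icc (-1 : ℝ) 1 := by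
        intro i
        have h1 := hmem p i
        have h2 := hz i
        simp only [Set.mem_Icc] at h1 h2 ⊢
        simp only [Pi.add_apply, Pi.smul_apply, hd, Pi.sub_apply, smul_eq_mul]
        constructor <;> nlinarith [h1.1, h1.2, h2.1, h2.2]
      have hineq := hopt p (u + t • d) hfeas
      have e1 : (u + t • d) ⬝ᵥ (H *ᵥ (u + t • d)) =
          u ⬝ᵥ H *ᵥ u + 2 * t * (d ⬝ᵥ H *ᵥ u) + t ^ 2 * C := by
        simp only [mulVec_add, mulVec_smul, dotProduct_add, add_dotProduct,
          dotProduct_smul, smul_dotProduct, smul_eq_mul, hC]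
        rw [hsymm u d]
        ring
      have e2 : h p ⬝ᵥ (u + t • d) = h p ⬝ᵥ u + t * (h p ⬝ᵥ d) := by
        simp only [dotProduct_add, dotProduct_smul, smul_eq_mul]
      have e3 : G = d ⬝ᵥ H *ᵥ u + h p ⬝ᵥ d := by
        rw [hG, add_dotProduct, dotProduct_comm (H *ᵥ u) d]
      rw [e1, e2] at hineq
      rw [e3]
      nlinarith
    by_contra hneg
    push_neg at hneg
    set t : ℝ := min 1 (-G / (C + 1)) with ht
    have htpos : 0 < t := by
      apply lt_min one_pos
      apply div_pos (by linarith) (by linarith)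
    have ht1 : t ≤ 1 := min_le_left _ _
    have ht2 : t ≤ -G / (C + 1) := min_le_right _ _
    have htC : t * (C + 1) ≤ -G := by
      rw [← div_mul_cancel₀ (-G) (show (C + 1 : ℝ) ≠ 0 by linarith)]
      exact mul_le_mul_of_nonneg_right ht2 (by linarith)
    have := key t htpos.le ht1
    nlinarith [mul_pos htpos (neg_pos.mpr hneg)]
  intro p q
  set u := zs p with hu
  set v := zs q with hv
  set d : Fin n → ℝ := u - v with hd
  have VIp := VI p v (hmem q)
  have VIq := VI q u (hmem p)
  -- strong monotonicity
  have hkey : d ⬝ᵥ H *ᵥ d ≤ (h q - h p) ⬝ᵥ d := by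
    have e1 : (H *ᵥ u + h p) ⬝ᵥ (v - u) =
        v ⬝ᵥ H *ᵥ u - u ⬝ᵥ H *ᵥ u + (h p ⬝ᵥ v - h p ⬝ᵥ u) := by
      rw [add_dotProduct, dotProduct_sub, dotProduct_sub,
        dotProduct_comm (H *ᵥ u) v, dotProduct_comm (H *ᵥ u) u]
    have e2 : (H *ᵥ v + h q) ⬝ᵥ (u - v) =
        u ⬝ᵥ H *ᵥ v - v ⬝ᵥ H *ᵥ v + (h q ⬝ᵥ u - h q ⬝ᵥ v) := by
      rw [add_dotProduct, dotProduct_sub, dotProduct_sub,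
        dotProduct_comm (H *ᵥ v) u, dotProduct_comm (H *ᵥ v) v]
    have e3 : d ⬝ᵥ H *ᵥ d =
        u ⬝ᵥ H *ᵥ u - u ⬝ᵥ H *ᵥ v - v ⬝ᵥ H *ᵥ u + v ⬝ᵥ H *ᵥ v := by
      simp only [hd, sub_dotProduct, dotProduct_sub, mulVec_sub]
      ring
    have e4 : (h q - h p) ⬝ᵥ d =
        h q ⬝ᵥ u - h q ⬝ᵥ v - (h p ⬝ᵥ u - h p ⬝ᵥ v) := by
      simp only [hd, sub_dotProduct, dotProduct_sub]
      ring
    rw [e1] at VIp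
    rw [e2] at VIq
    rw [e3, e4]
    have hsw := hsymm u v
    linarith
  have hCS : (h q - h p) ⬝ᵥ d ≤ euclEnorm (h p - h q) * euclEnorm d := by
    calc (h q - h p) ⬝ᵥ d ≤ euclEnorm (h q - h p) * euclEnorm d := dot_le_enorm_mul_enorm _ _
    _ = euclEnorm (h p - h q) * euclEnorm d := by rw [enorm_sub_symm]
  have hlow : lam * euclEnorm d ^ 2 ≤ d ⬝ᵥ H *ᵥ d := by
    rw [sq_enorm]; exact eig_quad_lower H hH d
  have hLq : euclEnorm (h p - h q) ≤ Lh * euclEnorm (p - q) := hLip p q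
  have hd0 : 0 ≤ euclEnorm d := enorm_nonneg' d
  have hpq0 : 0 ≤ euclEnorm (p - q) := enorm_nonneg' _
  have hRHS0 : 0 ≤ Lh * euclEnorm (p - q) := le_trans (enorm_nonneg' _) hLq
  have hmain : lam * euclEnorm d ^ 2 ≤ (Lh * euclEnorm (p - q)) * euclEnorm d := by
    calc lam * euclEnorm d ^ 2 ≤ d ⬝ᵥ H *ᵥ d := hlow
    _ ≤ (h q - h p) ⬝ᵥ d := hkey
    _ ≤ euclEnorm (h p - h q) * euclEnorm d := hCS
    _ ≤ (Lh * euclEnorm (p - q)) * euclEnorm d := mul_le_mul_of_nonneg_right hLq hd0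
  rcases eq_or_lt_of_le hd0 with h0 | h0
  · rw [← h0, div_mul_eq_mul_div]
    exact div_nonneg hRHS0 hlam_pos.le
  · have h1 : lam * euclEnorm d ≤ Lh * euclEnorm (p - q) := by nlinarith
    rw [div_mul_eq_mul_div, le_div_iff₀ hlam_pos]
    linarith [mul_comm lam (euclEnorm d)]
end

section
/- Let H be symmetric positive definite with smallest eigenvalue λ_min(H), let ψ : R^{n_x} → R^{n_ψ} be Lipschitz with constant L_ψ, and define h(x) = ρ[FᵀE; −E]ψ(x) − c. Let z*(x) be the unique minimizer of (1/2)zᵀHz + h(x)ᵀz over [-1,1]^n, and let u₀(x) = C z*(x) where C = [I_{n_u}, 0] selects the first n_u coordinates. Then u₀ is Lipschitz with constant ρ·sqrt(λ_max(Eᵀ(FFᵀ+I)E))·L_ψ / λ_min(H). -/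
open Matrix

/-- Euclidean norm of a finite real vector. -/
noncomputable def euclidEnorm {ι : Type*} [Fintype ι] (x : ι → ℝ) : ℝ :=
  Real.sqrt (∑ i, x i ^ 2)

lemma euclidEnorm_nonneg {ι : Type*} [Fintype ι] (x : ι → ℝ) : 0 ≤ euclidEnorm x :=
  Real.sqrt_nonneg _

lemma rayleigh_aux {n : Type*} [Fintype n] [DecidableEq n] (M : Matrix n n ℝ)
    (hM : M.IsHermitian) (v : n → ℝ) :
    v ⬝ᵥ (M *ᵥ v) = ∑ i, hM.eigenvalues i * (((hM.eigenvectorUnitary : Matrix n n ℝ)ᵀ *ᵥ v) i)^2 ∧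
    v ⬝ᵥ v = ∑ i, (((hM.eigenvectorUnitary : Matrix n n ℝ)ᵀ *ᵥ v) i)^2 := by
  set V : Matrix n n ℝ := (hM.eigenvectorUnitary : Matrix n n ℝ) with hV
  have hsV : star V = Vᵀ := by
    simp [Matrix.star_eq_conjTranspose, Matrix.conjTranspose_eq_transpose_of_trivial]
  set u : n → ℝ := Vᵀ *ᵥ v with hu
  have hVV : V * star V = 1 := Unitary.coe_mul_star_self hM.eigenvectorUnitary
  constructor
  · conv_lhs => rw [hM.spectral_theorem, Unitary.conjStarAlgAut_apply]
    rw [← hV, hsV, ← mulVec_mulVec, ← mulVec_mulVec, dotProduct_mulVec, ← mulVec_transpose, ← hu]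
    simp [dotProduct, mulVec_diagonal]
    refine Finset.sum_congr rfl fun i _ => ?_
    ring
  · have : v ⬝ᵥ v = v ⬝ᵥ ((V * Vᵀ) *ᵥ v) := by
      rw [← hsV, hVV, one_mulVec]
    rw [this, ← mulVec_mulVec, dotProduct_mulVec, ← mulVec_transpose, ← hu]
    simp [dotProduct]
    refine Finset.sum_congr rfl fun i _ => ?_
    ring

lemma rayleigh_le_sup {n : Type*} [Fintype n] [DecidableEq n] [Nonempty n]
    (M : Matrix n n ℝ) (hM : M.IsHermitian) (v : n → ℝ) :
    v ⬝ᵥ (M *ᵥ v) ≤ (Finset.univ.sup' Finset.univ_nonempty hM.eigenvalues) * (v ⬝ᵥ v) := by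
  obtain ⟨h1, h2⟩ := rayleigh_aux M hM v
  rw [h1, h2, Finset.mul_sum]
  refine Finset.sum_le_sum fun i _ => ?_
  have := Finset.le_sup' hM.eigenvalues (Finset.mem_univ i)
  nlinarith [sq_nonneg ((((hM.eigenvectorUnitary : Matrix n n ℝ))ᵀ *ᵥ v) i)]

lemma inf_le_rayleigh {n : Type*} [Fintype n] [DecidableEq n] [Nonempty n]
    (M : Matrix n n ℝ) (hM : M.IsHermitian) (v : n → ℝ) :
    (Finset.univ.inf' Finset.univ_nonempty hM.eigenvalues) * (v ⬝ᵥ v) ≤ v ⬝ᵥ (M *ᵥ v) := by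
  obtain ⟨h1, h2⟩ := rayleigh_aux M hM v
  rw [h1, h2, Finset.mul_sum]
  refine Finset.sum_le_sum fun i _ => ?_
  have := Finset.inf'_le hM.eigenvalues (Finset.mem_univ i)
  nlinarith [sq_nonneg ((((hM.eigenvectorUnitary : Matrix n n ℝ))ᵀ *ᵥ v) i)]

/-- Variational inequality for a box-constrained strongly convex QP minimizer. -/
lemma vi {n : Type*} [Fintype n] (H : Matrix n n ℝ) (hH : H.PosDef) (q : n → ℝ)
    (a : n → ℝ) (ha : ∀ i, a i ∈ Set.Icc (-1:ℝ) 1)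
    (hopt : ∀ z, (∀ i, z i ∈ Set.Icc (-1:ℝ) 1) →
      (1/2) * (a ⬝ᵥ (H *ᵥ a)) + q ⬝ᵥ a ≤ (1/2) * (z ⬝ᵥ (H *ᵥ z)) + q ⬝ᵥ z)
    (z : n → ℝ) (hz : ∀ i, z i ∈ Set.Icc (-1:ℝ) 1) :
    0 ≤ (H *ᵥ a + q) ⬝ᵥ (z - a) := by
  have hHt : Hᵀ = H := by
    rw [← Matrix.conjTranspose_eq_transpose_of_trivial]; exact hH.1
  have hsymm : ∀ x y : n → ℝ, x ⬝ᵥ (H *ᵥ y) = y ⬝ᵥ (H *ᵥ x) := by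
    intro x y
    rw [dotProduct_mulVec, ← mulVec_transpose, hHt, dotProduct_comm]
  set v : n → ℝ := z - a with hv
  set A : ℝ := v ⬝ᵥ (H *ᵥ a) + q ⬝ᵥ v with hA
  set B : ℝ := v ⬝ᵥ (H *ᵥ v) with hB
  have hBnn : 0 ≤ B := hH.posSemidef.dotProduct_mulVec_nonneg v
  have key : ∀ t : ℝ, 0 < t → t ≤ 1 → 0 ≤ t * A + t^2/2 * B := by
    intro t ht0 ht1
    have hw : ∀ i, (a + t • v) i ∈ Set.Icc (-1:ℝ) 1 := by
      intro i
      have hai := ha i; have hzi := hz i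
      simp only [Set.mem_Icc] at *
      have hvi : v i = z i - a i := rfl
      have : (a + t • v) i = (1 - t) * a i + t * z i := by
        simp only [Pi.add_apply, Pi.smul_apply, smul_eq_mul, hvi]; ring
      rw [this]
      constructor <;> nlinarith [hai.1, hai.2, hzi.1, hzi.2]
    have := hopt (a + t • v) hw
    have hexp : (a + t • v) ⬝ᵥ (H *ᵥ (a + t • v)) =
        a ⬝ᵥ (H *ᵥ a) + 2 * t * (v ⬝ᵥ (H *ᵥ a)) + t^2 * B := by
      rw [mulVec_add, mulVec_smul, dotProduct_add, add_dotProduct, add_dotProduct,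
        dotProduct_smul, smul_dotProduct, smul_dotProduct, dotProduct_smul,
        hsymm a v, hB]
      simp [smul_eq_mul]; ring
    have hq : q ⬝ᵥ (a + t • v) = q ⬝ᵥ a + t * (q ⬝ᵥ v) := by
      rw [dotProduct_add, dotProduct_smul]; simp [smul_eq_mul]
    rw [hexp, hq] at this
    nlinarith [this]
  have hA0 : 0 ≤ A := by
    by_contra hc
    push_neg at hc
    set t : ℝ := min 1 (-A / (B + 1)) with ht
    have htpos : 0 < t := by
      apply lt_min one_pos
      apply div_pos (by linarith) (by linarith)
    have ht1 : t ≤ 1 := min_le_left _ _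
    have htB : t * (B + 1) ≤ -A := by
      have := min_le_right 1 (-A / (B + 1))
      calc t * (B + 1) ≤ (-A / (B + 1)) * (B + 1) := by
            apply mul_le_mul_of_nonneg_right this (by linarith)
        _ = -A := by field_simp
    have := key t htpos ht1
    nlinarith [mul_pos htpos htpos, sq_nonneg t]
  have : (H *ᵥ a + q) ⬝ᵥ (z - a) = A := by
    rw [add_dotProduct, hA, ← hv, dotProduct_comm v]
  rw [this]; exact hA0

lemma dot_le_euclidEnorm_mul_euclidEnorm {ι : Type*} [Fintype ι] (a b : ι → ℝ) :
    a ⬝ᵥ b ≤ euclidEnorm a * euclidEnorm b := by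
  simpa [dotProduct, euclidEnorm] using Real.sum_mul_le_sqrt_mul_sqrt Finset.univ a b

lemma euclidEnorm_sq {ι : Type*} [Fintype ι] (a : ι → ℝ) : euclidEnorm a ^ 2 = a ⬝ᵥ a := by
  rw [euclidEnorm, Real.sq_sqrt (Finset.sum_nonneg fun i _ => sq_nonneg _)]
  simp [dotProduct, sq]

lemma euclidEnorm_smul {ι : Type*} [Fintype ι] (r : ℝ) (hr : 0 ≤ r) (a : ι → ℝ) :
    euclidEnorm (r • a) = r * euclidEnorm a := by
  simp only [euclidEnorm, Pi.smul_apply, smul_eq_mul, mul_pow]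
  rw [← Finset.mul_sum, Real.sqrt_mul (sq_nonneg r), Real.sqrt_sq hr]

theorem stmt_16 {nx nψ m k : ℕ} [Nonempty (Fin nψ)] [Nonempty (Fin k ⊕ Fin m)]
    (H : Matrix (Fin k ⊕ Fin m) (Fin k ⊕ Fin m) ℝ) (hH : H.PosDef)
    (ψ : (Fin nx → ℝ) → (Fin nψ → ℝ)) (Lψ : ℝ)
    (hψ : ∀ x y, euclidEnorm (ψ x - ψ y) ≤ Lψ * euclidEnorm (x - y))
    (ρ : ℝ) (hρ : 0 < ρ)
    (E : Matrix (Fin m) (Fin nψ) ℝ) (F : Matrix (Fin m) (Fin k) ℝ)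
    (c : Fin k ⊕ Fin m → ℝ)
    (hsym : (Eᵀ * (F * Fᵀ + 1) * E).IsHermitian)
    (zs : (Fin nx → ℝ) → (Fin k ⊕ Fin m → ℝ))
    (hmem : ∀ x i, zs x i ∈ Set.Icc (-1:ℝ) 1)
    (hopt : ∀ x z, (∀ i, z i ∈ Set.Icc (-1:ℝ) 1) →
      (1/2) * (zs x ⬝ᵥ (H *ᵥ zs x)) +
          (ρ • (Matrix.fromRows (Fᵀ * E) (-E) *ᵥ ψ x) - c) ⬝ᵥ zs x ≤
        (1/2) * (z ⬝ᵥ (H *ᵥ z)) +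
          (ρ • (Matrix.fromRows (Fᵀ * E) (-E) *ᵥ ψ x) - c) ⬝ᵥ z) :
    ∀ x y, euclidEnorm (fun i : Fin k => zs x (Sum.inl i) - zs y (Sum.inl i)) ≤
      ρ * Real.sqrt (Finset.univ.sup' Finset.univ_nonempty hsym.eigenvalues) * Lψ /
        (Finset.univ.inf' Finset.univ_nonempty hH.1.eigenvalues) * euclidEnorm (x - y) := by
  intro x y
  set A : Matrix (Fin k ⊕ Fin m) (Fin nψ) ℝ := Matrix.fromRows (Fᵀ * E) (-E) with hA
  set hx : Fin k ⊕ Fin m → ℝ := ρ • (A *ᵥ ψ x) - c with hhx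
  set hy : Fin k ⊕ Fin m → ℝ := ρ • (A *ᵥ ψ y) - c with hhy
  set d : Fin k ⊕ Fin m → ℝ := zs x - zs y with hd
  set lam : ℝ := Finset.univ.inf' Finset.univ_nonempty hH.1.eigenvalues with hlam
  set mu : ℝ := Finset.univ.sup' Finset.univ_nonempty hsym.eigenvalues with hmu
  have hlampos : 0 < lam := by
    rw [hlam, Finset.lt_inf'_iff]
    exact fun i _ => hH.eigenvalues_pos i
  -- A^T A = E^T (F F^T + 1) E
  have hAtA : Aᵀ * A = Eᵀ * (F * Fᵀ + 1) * E := by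
    rw [hA, Matrix.transpose_fromRows, Matrix.fromCols_mul_fromRows]
    simp only [Matrix.transpose_mul, Matrix.transpose_transpose, Matrix.transpose_neg,
      Matrix.neg_mul, Matrix.mul_neg, neg_neg]
    rw [Matrix.mul_add, Matrix.add_mul, Matrix.mul_one]
    simp only [Matrix.mul_assoc]
  -- bound on ‖A w‖
  have hAbound : ∀ w : Fin nψ → ℝ, euclidEnorm (A *ᵥ w) ≤ Real.sqrt mu * euclidEnorm w := by
    intro w
    have h1 : euclidEnorm (A *ᵥ w) ^ 2 ≤ mu * euclidEnorm w ^ 2 := by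
      rw [euclidEnorm_sq, euclidEnorm_sq]
      have : (A *ᵥ w) ⬝ᵥ (A *ᵥ w) = w ⬝ᵥ ((Eᵀ * (F * Fᵀ + 1) * E) *ᵥ w) := by
        have hMt : (Eᵀ * (F * Fᵀ + 1) * E)ᵀ = Eᵀ * (F * Fᵀ + 1) * E := by
          rw [← Matrix.conjTranspose_eq_transpose_of_trivial]; exact hsym
        rw [dotProduct_mulVec, ← mulVec_transpose, mulVec_mulVec, hAtA, dotProduct_comm,
          dotProduct_mulVec, ← mulVec_transpose, hMt]
      rw [this]
      exact rayleigh_le_sup _ hsym w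
    calc euclidEnorm (A *ᵥ w) = Real.sqrt (euclidEnorm (A *ᵥ w) ^ 2) := by
          rw [Real.sqrt_sq (euclidEnorm_nonneg _)]
      _ ≤ Real.sqrt (mu * euclidEnorm w ^ 2) := Real.sqrt_le_sqrt h1
      _ = Real.sqrt mu * euclidEnorm w := by
          rw [Real.sqrt_mul' _ (sq_nonneg _), Real.sqrt_sq (euclidEnorm_nonneg _)]
  -- variational inequalities
  have vix := vi H hH hx (zs x) (hmem x) (fun z hz => hopt x z hz) (zs y) (hmem y)
  have viy := vi H hH hy (zs y) (hmem y) (fun z hz => hopt y z hz) (zs x) (hmem x)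
  -- key inequality : d ⬝ᵥ H d ≤ (hy - hx) ⬝ᵥ d
  have hHt : Hᵀ = H := by
    rw [← Matrix.conjTranspose_eq_transpose_of_trivial]; exact hH.1
  have hsymm : ∀ p q : Fin k ⊕ Fin m → ℝ, p ⬝ᵥ (H *ᵥ q) = q ⬝ᵥ (H *ᵥ p) := by
    intro p q
    rw [dotProduct_mulVec, ← mulVec_transpose, hHt, dotProduct_comm]
  have key : d ⬝ᵥ (H *ᵥ d) ≤ (hy - hx) ⬝ᵥ d := by
    have e1 : (H *ᵥ zs x + hx) ⬝ᵥ (zs y - zs x) =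
        (H *ᵥ zs x) ⬝ᵥ zs y - (H *ᵥ zs x) ⬝ᵥ zs x + (hx ⬝ᵥ zs y - hx ⬝ᵥ zs x) := by
      rw [add_dotProduct, dotProduct_sub, dotProduct_sub]
    have e2 : (H *ᵥ zs y + hy) ⬝ᵥ (zs x - zs y) =
        (H *ᵥ zs y) ⬝ᵥ zs x - (H *ᵥ zs y) ⬝ᵥ zs y + (hy ⬝ᵥ zs x - hy ⬝ᵥ zs y) := by
      rw [add_dotProduct, dotProduct_sub, dotProduct_sub]
    rw [e1] at vix; rw [e2] at viy
    have e3 : d ⬝ᵥ (H *ᵥ d) = zs x ⬝ᵥ (H *ᵥ zs x) - zs x ⬝ᵥ (H *ᵥ zs y)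
        - zs y ⬝ᵥ (H *ᵥ zs x) + zs y ⬝ᵥ (H *ᵥ zs y) := by
      rw [hd, mulVec_sub, sub_dotProduct, dotProduct_sub, dotProduct_sub]; ring
    have e4 : (hy - hx) ⬝ᵥ d = hy ⬝ᵥ zs x - hy ⬝ᵥ zs y - hx ⬝ᵥ zs x + hx ⬝ᵥ zs y := by
      rw [hd, sub_dotProduct, dotProduct_sub, dotProduct_sub]; ring
    have c1 : (H *ᵥ zs x) ⬝ᵥ zs y = zs y ⬝ᵥ (H *ᵥ zs x) := dotProduct_comm _ _
    have c2 : (H *ᵥ zs x) ⬝ᵥ zs x = zs x ⬝ᵥ (H *ᵥ zs x) := dotProduct_comm _ _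
    have c3 : (H *ᵥ zs y) ⬝ᵥ zs x = zs x ⬝ᵥ (H *ᵥ zs y) := dotProduct_comm _ _
    have c4 : (H *ᵥ zs y) ⬝ᵥ zs y = zs y ⬝ᵥ (H *ᵥ zs y) := dotProduct_comm _ _
    have c5 : zs y ⬝ᵥ (H *ᵥ zs x) = zs x ⬝ᵥ (H *ᵥ zs y) := hsymm _ _
    rw [e3, e4]
    linarith [vix, viy]
  -- bound the right hand side
  have hdiff : hy - hx = ρ • (A *ᵥ (ψ y - ψ x)) := by
    rw [hhy, hhx, mulVec_sub, smul_sub]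
    ext i; simp
  have hrhs : (hy - hx) ⬝ᵥ d ≤ ρ * (Real.sqrt mu * euclidEnorm (ψ y - ψ x)) * euclidEnorm d := by
    calc (hy - hx) ⬝ᵥ d ≤ euclidEnorm (hy - hx) * euclidEnorm d := dot_le_euclidEnorm_mul_euclidEnorm _ _
      _ = ρ * euclidEnorm (A *ᵥ (ψ y - ψ x)) * euclidEnorm d := by
          rw [hdiff, euclidEnorm_smul ρ hρ.le]
      _ ≤ ρ * (Real.sqrt mu * euclidEnorm (ψ y - ψ x)) * euclidEnorm d := by
          apply mul_le_mul_of_nonneg_right _ (euclidEnorm_nonneg _)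
          exact mul_le_mul_of_nonneg_left (hAbound _) hρ.le
  have hψ' : euclidEnorm (ψ y - ψ x) ≤ Lψ * euclidEnorm (x - y) := by
    have : euclidEnorm (ψ y - ψ x) = euclidEnorm (ψ x - ψ y) := by
      simp only [euclidEnorm]
      congr 1
      exact Finset.sum_congr rfl fun i _ => by simp [Pi.sub_apply]; ring
    rw [this]; exact hψ x y
  have hLψe : 0 ≤ Lψ * euclidEnorm (x - y) := le_trans (euclidEnorm_nonneg _) (hψ x y)
  -- lower bound via smallest eigenvalue
  have hlow : lam * euclidEnorm d ^ 2 ≤ d ⬝ᵥ (H *ᵥ d) := by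
    rw [euclidEnorm_sq]; exact inf_le_rayleigh _ hH.1 d
  -- projection bound
  have hproj : euclidEnorm (fun i : Fin k => zs x (Sum.inl i) - zs y (Sum.inl i)) ≤ euclidEnorm d := by
    apply Real.sqrt_le_sqrt
    rw [Fintype.sum_sum_type]
    have : ∀ i : Fin k, (zs x (Sum.inl i) - zs y (Sum.inl i)) ^ 2 = d (Sum.inl i) ^ 2 := by
      intro i; rw [hd]; simp [Pi.sub_apply]
    rw [Finset.sum_congr rfl fun i _ => this i]
    have : 0 ≤ ∑ i : Fin m, d (Sum.inr i) ^ 2 :=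
      Finset.sum_nonneg fun i _ => sq_nonneg _
    linarith
  -- assemble
  have hchain : lam * euclidEnorm d ^ 2 ≤ ρ * Real.sqrt mu * Lψ * euclidEnorm (x - y) * euclidEnorm d := by
    have h1 : ρ * (Real.sqrt mu * euclidEnorm (ψ y - ψ x)) * euclidEnorm d ≤
        ρ * Real.sqrt mu * Lψ * euclidEnorm (x - y) * euclidEnorm d := by
      have : ρ * (Real.sqrt mu * euclidEnorm (ψ y - ψ x)) ≤ ρ * Real.sqrt mu * (Lψ * euclidEnorm (x - y)) := by
        have := mul_le_mul_of_nonneg_left hψ' (mul_nonneg hρ.le (Real.sqrt_nonneg mu))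
        linarith [this]
      calc ρ * (Real.sqrt mu * euclidEnorm (ψ y - ψ x)) * euclidEnorm d
          ≤ ρ * Real.sqrt mu * (Lψ * euclidEnorm (x - y)) * euclidEnorm d :=
            mul_le_mul_of_nonneg_right this (euclidEnorm_nonneg _)
        _ = ρ * Real.sqrt mu * Lψ * euclidEnorm (x - y) * euclidEnorm d := by ring
    linarith [hlow, key, hrhs, h1]
  rcases eq_or_lt_of_le (euclidEnorm_nonneg d) with h0 | h0
  · have : euclidEnorm (fun i : Fin k => zs x (Sum.inl i) - zs y (Sum.inl i)) ≤ 0 := by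
      rw [← h0] at hproj; exact hproj
    have hrhs0 : 0 ≤ ρ * Real.sqrt mu * Lψ / lam * euclidEnorm (x - y) := by
      have : ρ * Real.sqrt mu * Lψ / lam * euclidEnorm (x - y)
          = (ρ * Real.sqrt mu / lam) * (Lψ * euclidEnorm (x - y)) := by ring
      rw [this]
      exact mul_nonneg (div_nonneg (mul_nonneg hρ.le (Real.sqrt_nonneg _)) hlampos.le) hLψe
    linarith [euclidEnorm_nonneg (fun i : Fin k => zs x (Sum.inl i) - zs y (Sum.inl i))]
  · have hde : lam * euclidEnorm d ≤ ρ * Real.sqrt mu * Lψ * euclidEnorm (x - y) := by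
      have := hchain
      nlinarith [h0]
    have : euclidEnorm d ≤ ρ * Real.sqrt mu * Lψ / lam * euclidEnorm (x - y) := by
      rw [div_mul_eq_mul_div, le_div_iff₀ hlampos]
      nlinarith [hde]
    linarith [hproj]
end
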